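/- arXiv:2204.05507 — 8 statements merged into one kernel-verified Lean document; each statement's English description precedes it below -/
import Mathlib

section
/- Let X ⊆ ℝⁿ be a convex set, let ℓ_i : ℝⁿ → ℝ be differentiable for i = 1,…,n, let Φ : ℝⁿ → ℝ be convex and differentiable, and define Dℓ(x) = (∂ℓ_i/∂x_i(x))_{i=1}^n and the externality e(x) = ∇Φ(x) − Dℓ(x). Suppose x* ∈ X and p ∈ ℝⁿ satisfy (i) the Nash variational inequality ⟨Dℓ(x*) + p, x − x*⟩ ≥ 0 for all x ∈ X, and (ii) the fixed-point condition e(x*) = p. Then x* is a global minimizer of Φ over X, i.e., Φ(x*) ≤ Φ(x) for all x ∈ X. -/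
open Finset

/-- The vector of players' own-strategy marginal costs: `Dℓ(x)ᵢ = ∂ℓᵢ/∂xᵢ(x)`. -/
noncomputable def ownMarginal {n : ℕ} (ℓ : Fin n → (Fin n → ℝ) → ℝ) (x : Fin n → ℝ) :
    Fin n → ℝ :=
  fun i => fderiv ℝ (ℓ i) x (Pi.single i 1)

/-- The gradient of a function `Φ : ℝⁿ → ℝ`: `∇Φ(x)ᵢ = ∂Φ/∂xᵢ(x)`. -/
noncomputable def gradVec {n : ℕ} (Φ : (Fin n → ℝ) → ℝ) (x : Fin n → ℝ) : Fin n → ℝ :=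
  fun i => fderiv ℝ Φ x (Pi.single i 1)

/-- Linearity: the differential applied to `v` is the sum of partials times components. -/
lemma fderiv_apply_eq_sum {n : ℕ} (Φ : (Fin n → ℝ) → ℝ) (x v : Fin n → ℝ) :
    fderiv ℝ Φ x v = ∑ i, gradVec Φ x i * (v i) := by
  have hv : v = ∑ i, (v i) • (Pi.single i (1 : ℝ) : Fin n → ℝ) := by
    funext j
    simp [Finset.sum_apply, Pi.single_apply, mul_comm]
  conv_lhs => rw [hv]
  rw [map_sum]
  refine Finset.sum_congr rfl fun i _ => ?_
  rw [map_smul]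
  simp [gradVec, smul_eq_mul, mul_comm]

/-- alignment part of Proposition 1, atomic games:
If `x* ∈ X` satisfies the Nash variational inequality for the incentive vector `p`, and
`p` equals the externality `e(x*) = ∇Φ(x*) − Dℓ(x*)`, then `x*` minimizes the convex
social cost `Φ` over the convex set `X`. -/
theorem nash_externality_fixed_point_is_socially_optimal
    (n : ℕ) (X : Set (Fin n → ℝ)) (hX : Convex ℝ X)
    (ℓ : Fin n → (Fin n → ℝ) → ℝ) (hℓ : ∀ i, Differentiable ℝ (ℓ i))
    (Φ : (Fin n → ℝ) → ℝ) (hΦconv : ConvexOn ℝ Set.univ Φ) (hΦdiff : Differentiable ℝ Φ)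
    (xstar : Fin n → ℝ) (p : Fin n → ℝ) (hmem : xstar ∈ X)
    (hVI : ∀ x ∈ X, 0 ≤ ∑ i, (ownMarginal ℓ xstar i + p i) * (x i - xstar i))
    (hfp : ∀ i, gradVec Φ xstar i - ownMarginal ℓ xstar i = p i) :
    ∀ x ∈ X, Φ xstar ≤ Φ x := by
  intro x hx
  set v : Fin n → ℝ := x - xstar with hv
  -- the gradient inequality direction: ⟨∇Φ(x*), x - x*⟩ ≥ 0
  have hgrad : 0 ≤ fderiv ℝ Φ xstar v := by
    rw [fderiv_apply_eq_sum]
    have := hVI x hx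
    have hco : ∀ i, ownMarginal ℓ xstar i + p i = gradVec Φ xstar i := fun i => by
      have := hfp i; linarith
    calc (0:ℝ) ≤ ∑ i, (ownMarginal ℓ xstar i + p i) * (x i - xstar i) := this
      _ = ∑ i, gradVec Φ xstar i * (v i) := by
          refine Finset.sum_congr rfl fun i _ => ?_
          rw [hco i]; simp [hv]
  -- restrict to the line through x* and x
  set g : ℝ → ℝ := fun t => Φ (xstar + t • v) with hg
  have hline : ∀ t : ℝ, xstar + t • v = (AffineMap.lineMap xstar x : ℝ →ᵃ[ℝ] (Fin n → ℝ)) t := by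
    intro t; simp [AffineMap.lineMap_apply, hv]; abel
  have hgconv : ConvexOn ℝ Set.univ g := by
    have h0 := hΦconv.comp_affineMap (AffineMap.lineMap xstar x)
    have h1 : ConvexOn ℝ Set.univ (Φ ∘ ⇑(AffineMap.lineMap xstar x : ℝ →ᵃ[ℝ] (Fin n → ℝ))) := by
      simpa using h0
    exact h1.congr (fun t _ => by simp [hg, Function.comp, ← hline t])
  have hderiv : HasDerivAt g (fderiv ℝ Φ xstar v) 0 := by
    have h1 : HasDerivAt (fun t : ℝ => xstar + t • v) v 0 := by
      simpa using ((hasDerivAt_id (0:ℝ)).smul_const v).const_add xstar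
    have h2 : HasFDerivAt Φ (fderiv ℝ Φ xstar) (xstar + (0:ℝ) • v) := by
      simpa using (hΦdiff (xstar)).hasFDerivAt
    exact h2.comp_hasDerivAt 0 h1
  have hslope := hΦconv.comp_affineMap (AffineMap.lineMap xstar x)
  have key : fderiv ℝ Φ xstar v ≤ slope g 0 1 :=
    hgconv.le_slope_of_hasDerivAt (Set.mem_univ 0) (Set.mem_univ 1) one_pos hderiv
  have hslope1 : slope g 0 1 = g 1 - g 0 := by
    simp [slope_def_field]
  have : g 0 ≤ g 1 := by
    rw [hslope1] at key; linarith
  simpa [hg, hv] using this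
end

section
/- Let X ⊆ ℝ^m be a convex set, let ℓ̃ : ℝ^m → ℝ^m be a map (the cost vector), let Φ̃ : ℝ^m → ℝ be convex and differentiable, and define the externality ẽ(x) = ∇Φ̃(x) − ℓ̃(x). Suppose x* ∈ X and p̃ ∈ ℝ^m satisfy (i) the Nash variational inequality ⟨ℓ̃(x*) + p̃, x − x*⟩ ≥ 0 for all x ∈ X, and (ii) the fixed-point condition ẽ(x*) = p̃. Then x* is a global minimizer of Φ̃ over X, i.e., Φ̃(x*) ≤ Φ̃(x) for all x ∈ X. -/
open Finset

/-- alignment part of Proposition 1, non-atomic games: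
If `x* ∈ X` satisfies the Wardrop variational inequality for the incentive vector `p̃`, and
`p̃` equals the externality `ẽ(x*) = ∇Φ̃(x*) − ℓ̃(x*)`, then `x*` minimizes the convex
social cost `Φ̃` over the convex set `X`. -/
theorem nonatomic_externality_fixed_point_is_socially_optimal
    (m : ℕ) (X : Set (Fin m → ℝ)) (hX : Convex ℝ X)
    (ℓ : (Fin m → ℝ) → (Fin m → ℝ))
    (Φ : (Fin m → ℝ) → ℝ) (hΦconv : ConvexOn ℝ Set.univ Φ) (hΦdiff : Differentiable ℝ Φ)
    (xstar : Fin m → ℝ) (p : Fin m → ℝ) (hmem : xstar ∈ X)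
    (hVI : ∀ x ∈ X, 0 ≤ ∑ j, (ℓ xstar j + p j) * (x j - xstar j))
    (hfp : ∀ j, fderiv ℝ Φ xstar (Pi.single j 1) - ℓ xstar j = p j) :
    ∀ x ∈ X, Φ xstar ≤ Φ x := by
  intro x hx
  set v : Fin m → ℝ := x - xstar with hv
  -- the derivative of Φ at xstar in direction v is nonneg
  have hder : 0 ≤ fderiv ℝ Φ xstar v := by
    have hvsum : v = ∑ j, v j • (Pi.single j 1 : Fin m → ℝ) := by
      have := pi_eq_sum_univ v
      convert this using 2 with j
      ext i
      simp [Pi.single_apply, eq_comm]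
    have : fderiv ℝ Φ xstar v = ∑ j, v j * fderiv ℝ Φ xstar (Pi.single j 1) := by
      conv_lhs => rw [hvsum]
      simp [map_sum, map_smul, smul_eq_mul]
    rw [this]
    have := hVI x hx
    calc (0:ℝ) ≤ ∑ j, (ℓ xstar j + p j) * (x j - xstar j) := hVI x hx
      _ = ∑ j, v j * fderiv ℝ Φ xstar (Pi.single j 1) := by
          apply Finset.sum_congr rfl
          intro j _
          have := hfp j
          have : ℓ xstar j + p j = fderiv ℝ Φ xstar (Pi.single j 1) := by linarith
          rw [this]
          simp [hv, Pi.sub_apply, mul_comm]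
  -- restrict to the segment
  set g : ℝ → ℝ := fun t => Φ (xstar + t • v) with hg
  have hgconv : ConvexOn ℝ Set.univ g := by
    have := hΦconv.comp_affineMap (AffineMap.lineMap xstar (x : Fin m → ℝ))
    have heq : g = Φ ∘ (AffineMap.lineMap xstar x) := by
      funext t
      simp only [hg, Function.comp_apply, AffineMap.lineMap_apply, hv]
      congr 1
      ext i
      simp [Pi.sub_apply]
      ring
    rw [heq]
    simpa using this
  have hgderiv : HasDerivAt g (fderiv ℝ Φ xstar v) 0 := by
    have hline : HasDerivAt (fun t : ℝ => xstar + t • v) v 0 := by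
      simpa using ((hasDerivAt_id (0:ℝ)).smul_const v).const_add xstar
    have h0 : xstar + (0:ℝ) • v = xstar := by simp
    have hΦd : HasFDerivAt Φ (fderiv ℝ Φ xstar) (xstar + (0:ℝ) • v) := by
      rw [h0]; exact (hΦdiff xstar).hasFDerivAt
    exact hΦd.comp_hasDerivAt 0 hline
  have h01 : (0:ℝ) < 1 := one_pos
  have := hgconv.le_slope_of_hasDerivAt (Set.mem_univ 0) (Set.mem_univ 1) h01 hgderiv
  have hslope : slope g 0 1 = g 1 - g 0 := by simp [slope_def_field]
  have : fderiv ℝ Φ xstar v ≤ g 1 - g 0 := by rwa [hslope] at this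
  have hg0 : g 0 = Φ xstar := by simp [hg]
  have hg1 : g 1 = Φ x := by simp [hg, hv]
  rw [hg0, hg1] at this
  linarith
end

section
/- Let ℓ_i : ℝⁿ → ℝ be differentiable for i = 1,…,n, let Φ : ℝⁿ → ℝ be strictly convex and differentiable, and define Dℓ(x) = (∂ℓ_i/∂x_i(x))_{i=1}^n and e(x) = ∇Φ(x) − Dℓ(x). Let x* : ℝⁿ → ℝⁿ be a map satisfying the interior first-order condition Dℓ(x*(p)) + p = 0 for every p ∈ ℝⁿ. If p†, q† ∈ ℝⁿ both satisfy the fixed-point conditions e(x*(p†)) = p† and e(x*(q†)) = q†, then p† = q†. -/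
open Finset

/-- A critical point of a convex differentiable function on `ℝⁿ` is a global minimum. -/
lemma isMinOn_of_fderiv_eq_zero' {n : ℕ} {f : (Fin n → ℝ) → ℝ}
    (hconv : ConvexOn ℝ Set.univ f) (hdiff : Differentiable ℝ f)
    {a : Fin n → ℝ} (ha : fderiv ℝ f a = 0) : ∀ y, f a ≤ f y := by
  intro y
  set g : ℝ → ℝ := fun t => f (a + t • (y - a)) with hg
  have hline : ∀ t : ℝ, HasDerivAt (fun s : ℝ => a + s • (y - a)) (y - a) t := by
    intro t
    simpa using ((hasDerivAt_id t).smul_const (y - a)).const_add a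
  have hgderiv : HasDerivAt g 0 0 := by
    have h1 : HasFDerivAt f (fderiv ℝ f a) (a + (0 : ℝ) • (y - a)) := by
      simpa using (hdiff (a + (0 : ℝ) • (y - a))).hasFDerivAt
    have := h1.comp_hasDerivAt 0 (hline 0)
    simp only [ha, ContinuousLinearMap.zero_apply] at this
    exact this
  have hgconv : ConvexOn ℝ Set.univ g := by
    refine ⟨convex_univ, ?_⟩
    intro s _ t _ c d hc hd hcd
    have := hconv.2 (Set.mem_univ (a + s • (y - a))) (Set.mem_univ (a + t • (y - a))) hc hd hcd
    have harg : c • (a + s • (y - a)) + d • (a + t • (y - a))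
        = a + (c * s + d * t) • (y - a) := by
      have h1 : c • (a + s • (y - a)) + d • (a + t • (y - a))
          = (c + d) • a + (c * s + d * t) • (y - a) := by module
      rw [h1, hcd, one_smul]
    rw [harg] at this
    simpa [hg] using this
  have hslope := hgconv.le_slope_of_hasDerivAt (Set.mem_univ (0 : ℝ))
    (Set.mem_univ (1 : ℝ)) one_pos hgderiv
  have : (0 : ℝ) ≤ g 1 - g 0 := by
    have hs : slope g 0 1 = g 1 - g 0 := by simp [slope_def_field]
    linarith [hs ▸ hslope]
  have hg0 : g 0 = f a := by simp [hg]
  have hg1 : g 1 = f y := by simp [hg]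
  linarith [hg0 ▸ hg1 ▸ this]

/-- Proposition 2, condition (i):
If the equilibrium map `x*` satisfies the interior first-order condition
`Dℓ(x*(p)) + p = 0` for every `p`, `Φ` is strictly convex and differentiable, and the
externality `e(x) = ∇Φ(x) − Dℓ(x)`, then there is at most one fixed point of
`p ↦ e(x*(p))`. -/
theorem interior_equilibria_unique_optimal_incentive
    (n : ℕ) (ℓ : Fin n → (Fin n → ℝ) → ℝ) (hℓ : ∀ i, Differentiable ℝ (ℓ i))
    (Φ : (Fin n → ℝ) → ℝ) (hΦconv : StrictConvexOn ℝ Set.univ Φ)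
    (hΦdiff : Differentiable ℝ Φ)
    (xstar : (Fin n → ℝ) → (Fin n → ℝ))
    (hFOC : ∀ p : Fin n → ℝ, ∀ i, ownMarginal ℓ (xstar p) i + p i = 0)
    (pdag qdag : Fin n → ℝ)
    (hp : ∀ i, gradVec Φ (xstar pdag) i - ownMarginal ℓ (xstar pdag) i = pdag i)
    (hq : ∀ i, gradVec Φ (xstar qdag) i - ownMarginal ℓ (xstar qdag) i = qdag i) :
    pdag = qdag := by
  -- gradient of Φ vanishes at x*(p†) and x*(q†)
  have hgrad : ∀ (p : Fin n → ℝ),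
      (∀ i, gradVec Φ (xstar p) i - ownMarginal ℓ (xstar p) i = p i) →
      fderiv ℝ Φ (xstar p) = 0 := by
    intro p hpfix
    have hcoord : ∀ i, fderiv ℝ Φ (xstar p) (Pi.single i 1) = 0 := by
      intro i
      have h1 := hFOC p i
      have h2 := hpfix i
      simp only [ownMarginal, gradVec] at h1 h2 ⊢
      linarith
    ext v
    have hv : v = ∑ i, v i • (Pi.single i 1 : Fin n → ℝ) := by
      funext j
      simp [Pi.single_apply, Finset.sum_apply]
    rw [hv]
    simp [map_sum, map_smul, hcoord]
  have hpa : fderiv ℝ Φ (xstar pdag) = 0 := hgrad pdag hp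
  have hqa : fderiv ℝ Φ (xstar qdag) = 0 := hgrad qdag hq
  have hminp : IsMinOn Φ Set.univ (xstar pdag) := by
    intro y _
    exact isMinOn_of_fderiv_eq_zero' hΦconv.convexOn hΦdiff hpa y
  have hminq : IsMinOn Φ Set.univ (xstar qdag) := by
    intro y _
    exact isMinOn_of_fderiv_eq_zero' hΦconv.convexOn hΦdiff hqa y
  have hxeq : xstar pdag = xstar qdag :=
    hΦconv.eq_of_isMinOn hminp hminq (Set.mem_univ _) (Set.mem_univ _)
  funext i
  have h1 := hFOC pdag i
  have h2 := hFOC qdag i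
  rw [hxeq] at h1
  linarith
end

section
/- Let X ⊆ ℝⁿ, let ℓ_i : ℝⁿ → ℝ be differentiable for i = 1,…,n with Dℓ(x) = (∂ℓ_i/∂x_i(x))_{i=1}^n monotone on X (⟨Dℓ(x) − Dℓ(y), x − y⟩ ≥ 0 for all x, y ∈ X), and let e : ℝⁿ → ℝⁿ be strictly monotone on X, i.e., ⟨e(x) − e(y), x − y⟩ > 0 for all x ≠ y in X. Let x* : ℝⁿ → X be a map such that for every p ∈ ℝⁿ, ⟨Dℓ(x*(p)) + p, x − x*(p)⟩ ≥ 0 for all x ∈ X. Then there is at most one p† ∈ ℝⁿ satisfying e(x*(p†)) = p†. -/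
open Finset

/-- Proposition 2, condition (ii), atomic games:
If `Dℓ` is monotone on `X`, the externality `e` is strictly monotone on `X`, and `x*(p)`
is a Nash equilibrium for every incentive `p` (characterized by the variational
inequality), then there is at most one fixed point of `p ↦ e(x*(p))`. -/
theorem strictly_monotone_externality_unique_optimal_incentive
    (n : ℕ) (X : Set (Fin n → ℝ))
    (ℓ : Fin n → (Fin n → ℝ) → ℝ) (hℓ : ∀ i, Differentiable ℝ (ℓ i))
    (hmono : ∀ x ∈ X, ∀ y ∈ X,
      0 ≤ ∑ i, (ownMarginal ℓ x i - ownMarginal ℓ y i) * (x i - y i))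
    (e : (Fin n → ℝ) → (Fin n → ℝ))
    (hemono : ∀ x ∈ X, ∀ y ∈ X, x ≠ y → 0 < ∑ i, (e x i - e y i) * (x i - y i))
    (xstar : (Fin n → ℝ) → (Fin n → ℝ)) (hxmem : ∀ p, xstar p ∈ X)
    (hVI : ∀ p : Fin n → ℝ, ∀ x ∈ X,
      0 ≤ ∑ i, (ownMarginal ℓ (xstar p) i + p i) * (x i - xstar p i)) :
    ∀ pdag qdag : Fin n → ℝ, e (xstar pdag) = pdag → e (xstar qdag) = qdag →
      pdag = qdag := by
  intro p q hp hq
  by_cases hxy : xstar p = xstar q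
  · rw [← hp, ← hq, hxy]
  · exfalso
    have hpos := hemono (xstar p) (hxmem p) (xstar q) (hxmem q) hxy
    rw [hp, hq] at hpos
    have h1 := hVI p (xstar q) (hxmem q)
    have h2 := hVI q (xstar p) (hxmem p)
    have h3 := hmono (xstar p) (hxmem p) (xstar q) (hxmem q)
    have hsum : ∑ i, (p i - q i) * (xstar p i - xstar q i)
        ≤ - ∑ i, (ownMarginal ℓ (xstar p) i - ownMarginal ℓ (xstar q) i)
            * (xstar p i - xstar q i) := by
      have := add_nonneg h1 h2
      rw [← Finset.sum_add_distrib] at this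
      have key : ∀ i, (ownMarginal ℓ (xstar p) i + p i) * (xstar q i - xstar p i)
          + (ownMarginal ℓ (xstar q) i + q i) * (xstar p i - xstar q i)
          = -((ownMarginal ℓ (xstar p) i - ownMarginal ℓ (xstar q) i)
              * (xstar p i - xstar q i))
            - (p i - q i) * (xstar p i - xstar q i) := by
        intro i; ring
      simp_rw [key] at this
      rw [Finset.sum_sub_distrib, Finset.sum_neg_distrib] at this
      linarith
    linarith
end

section
/- Let X ⊆ ℝ^m, let ℓ̃ : X → ℝ^m be strictly monotone on X, i.e., ⟨ℓ̃(x) − ℓ̃(y), x − y⟩ > 0 for all x ≠ y in X, and let ẽ : X → ℝ^m be strictly monotone on X, i.e., ⟨ẽ(x) − ẽ(y), x − y⟩ > 0 for all x ≠ y in X. Let x̃* : ℝ^m → X be a map such that for every p̃ ∈ ℝ^m, ⟨ℓ̃(x̃*(p̃)) + p̃, x − x̃*(p̃)⟩ ≥ 0 for all x ∈ X. Then there is at most one p̃† ∈ ℝ^m satisfying ẽ(x̃*(p̃†)) = p̃†. -/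
open Finset

/-- Proposition 2, non-atomic games:
If the cost map `ℓ̃` and the externality `ẽ` are both strictly monotone on `X`, and
`x̃*(p̃)` is a Wardrop equilibrium for every incentive `p̃` (characterized by the
variational inequality), then there is at most one fixed point of `p̃ ↦ ẽ(x̃*(p̃))`. -/
theorem nonatomic_unique_optimal_incentive
    (m : ℕ) (X : Set (Fin m → ℝ))
    (ℓ : (Fin m → ℝ) → (Fin m → ℝ))
    (hℓmono : ∀ x ∈ X, ∀ y ∈ X, x ≠ y → 0 < ∑ j, (ℓ x j - ℓ y j) * (x j - y j))
    (e : (Fin m → ℝ) → (Fin m → ℝ))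
    (hemono : ∀ x ∈ X, ∀ y ∈ X, x ≠ y → 0 < ∑ j, (e x j - e y j) * (x j - y j))
    (xstar : (Fin m → ℝ) → (Fin m → ℝ)) (hxmem : ∀ p, xstar p ∈ X)
    (hVI : ∀ p : Fin m → ℝ, ∀ x ∈ X,
      0 ≤ ∑ j, (ℓ (xstar p) j + p j) * (x j - xstar p j)) :
    ∀ pdag qdag : Fin m → ℝ, e (xstar pdag) = pdag → e (xstar qdag) = qdag →
      pdag = qdag := by
  intro p q hp hq
  by_cases hxy : xstar p = xstar q
  · rw [← hp, ← hq, hxy]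
  · exfalso
    have h1 := hVI p (xstar q) (hxmem q)
    have h2 := hVI q (xstar p) (hxmem p)
    have hℓ := hℓmono (xstar p) (hxmem p) (xstar q) (hxmem q) hxy
    have he := hemono (xstar p) (hxmem p) (xstar q) (hxmem q) hxy
    rw [hp, hq] at he
    have hsum : ∑ j, (ℓ (xstar p) j - ℓ (xstar q) j) * (xstar p j - xstar q j)
        + ∑ j, (p j - q j) * (xstar p j - xstar q j)
        = -((∑ j, (ℓ (xstar p) j + p j) * (xstar q j - xstar p j))
          + ∑ j, (ℓ (xstar q) j + q j) * (xstar p j - xstar q j)) := by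
      rw [← Finset.sum_add_distrib, ← Finset.sum_add_distrib, ← Finset.sum_neg_distrib]
      apply Finset.sum_congr rfl
      intro j _
      ring
    nlinarith [h1, h2, hℓ, he]
end

section
/- Let n ≥ 1, let W ∈ ℝ^{n×n} with W_ii = 0, let K = diag(k₁,…,k_n), and let ξ ∈ ℝⁿ. In the networked aggregative game with player costs ℓ_i(x) = ½ x_i² − k_i x_i (Wx)_i and social cost Φ(x) = ½ Σ_i (x_i − ξ_i)², the externality e(x) = ∇Φ(x) − (∂ℓ_i/∂x_i(x))_i equals e(x) = KWx − ξ. There is exactly one pair (x̂, p̂) ∈ ℝⁿ × ℝⁿ satisfying both the fixed-point condition e(x̂) = p̂ and the Nash condition (I − KW) x̂ = −p̂, namely x̂ = ξ and p̂ = (KW − I) ξ. In particular, the induced equilibrium x̂ = ξ is the unique minimizer of Φ. -/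
open Finset Matrix

/-- Player `i`'s cost in the networked aggregative game:
`ℓᵢ(x) = ½ xᵢ² − kᵢ xᵢ (Wx)ᵢ`. -/
noncomputable def aggLoss {n : ℕ} (W : Matrix (Fin n) (Fin n) ℝ) (k : Fin n → ℝ)
    (i : Fin n) (x : Fin n → ℝ) : ℝ :=
  (1 / 2 : ℝ) * (x i) ^ 2 - k i * x i * (W.mulVec x i)

/-- Social cost of the networked aggregative game: `Φ(x) = ½ Σᵢ (xᵢ − ξᵢ)²`. -/
noncomputable def aggSocialCost {n : ℕ} (ξ : Fin n → ℝ) (x : Fin n → ℝ) : ℝ :=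
  (1 / 2 : ℝ) * ∑ i, (x i - ξ i) ^ 2

/-- Externality `e(x)ᵢ = ∂Φ/∂xᵢ(x) − ∂ℓᵢ/∂xᵢ(x)` of the networked aggregative game. -/
noncomputable def aggExternality {n : ℕ} (W : Matrix (Fin n) (Fin n) ℝ) (k : Fin n → ℝ)
    (ξ : Fin n → ℝ) (x : Fin n → ℝ) (i : Fin n) : ℝ :=
  fderiv ℝ (aggSocialCost ξ) x (Pi.single i 1) - fderiv ℝ (aggLoss W k i) x (Pi.single i 1)

lemma social_fderiv {n : ℕ} (ξ x : Fin n → ℝ) (i : Fin n) :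
    fderiv ℝ (aggSocialCost ξ) x (Pi.single i 1) = x i - ξ i := by
  have H : HasFDerivAt (aggSocialCost ξ)
      ((1/2 : ℝ) • ∑ j, ((x j - ξ j) • (ContinuousLinearMap.proj j : (Fin n → ℝ) →L[ℝ] ℝ)
        + (x j - ξ j) • (ContinuousLinearMap.proj j : (Fin n → ℝ) →L[ℝ] ℝ))) x := by
    unfold aggSocialCost
    simp only [pow_two]
    refine HasFDerivAt.const_mul (HasFDerivAt.fun_sum (fun j _ => ?_)) _
    have h : HasFDerivAt (fun y : Fin n → ℝ => y j - ξ j)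
        (ContinuousLinearMap.proj j : (Fin n → ℝ) →L[ℝ] ℝ) x :=
      (ContinuousLinearMap.proj j : (Fin n → ℝ) →L[ℝ] ℝ).hasFDerivAt.sub_const (ξ j)
    exact h.mul h
  rw [H.fderiv]
  simp only [ContinuousLinearMap.smul_apply, ContinuousLinearMap.coe_sum', Finset.sum_apply,
    ContinuousLinearMap.add_apply, ContinuousLinearMap.proj_apply, smul_eq_mul, Pi.single_apply]
  rw [Finset.sum_eq_single i (by intro b _ h; simp [h]) (by simp)]
  simp; ring

lemma loss_fderiv {n : ℕ} (W : Matrix (Fin n) (Fin n) ℝ) (hW : ∀ i, W i i = 0)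
    (k : Fin n → ℝ) (x : Fin n → ℝ) (i : Fin n) :
    fderiv ℝ (aggLoss W k i) x (Pi.single i 1) = x i - k i * W.mulVec x i := by
  set P : (Fin n → ℝ) →L[ℝ] ℝ := ContinuousLinearMap.proj i with hP
  set M : (Fin n → ℝ) →L[ℝ] ℝ :=
    P.comp (LinearMap.toContinuousLinearMap (Matrix.mulVecLin W)) with hM
  have hMder : HasFDerivAt (fun y : Fin n → ℝ => W.mulVec y i) M x := by
    have := M.hasFDerivAt (x := x)
    convert this using 2
    simp [hM, hP]
  have H : HasFDerivAt (aggLoss W k i)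
      ((1/2 : ℝ) • (x i • P + x i • P) - ((k i * x i) • M + (W.mulVec x i) • ((k i) • P))) x := by
    unfold aggLoss
    simp only [pow_two]
    exact ((P.hasFDerivAt.mul P.hasFDerivAt).const_mul _).sub
      ((P.hasFDerivAt.const_mul (k i)).mul hMder)
  rw [H.fderiv]
  have hMval : M (Pi.single i 1) = 0 := by
    simp [hM, hP, Matrix.mulVec_single, hW i]
  simp [hMval, hP]
  ring

/-- fixed-point part of Proposition 3, networked aggregative games:
the externality equals `e(x) = KWx − ξ`; the unique pair satisfying `e(x̂) = p̂` and the
Nash condition `(I − KW) x̂ = −p̂` is `x̂ = ξ, p̂ = (KW − I)ξ`; and `ξ` is the unique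
minimizer of `Φ`. -/
theorem aggregative_optimal_incentive
    (n : ℕ) (hn : 1 ≤ n) (W : Matrix (Fin n) (Fin n) ℝ) (hW : ∀ i, W i i = 0)
    (k : Fin n → ℝ) (ξ : Fin n → ℝ) :
    (∀ (x : Fin n → ℝ) (i : Fin n),
      aggExternality W k ξ x i = (Matrix.diagonal k * W).mulVec x i - ξ i) ∧
    (∀ (xh ph : Fin n → ℝ),
      ((∀ i, aggExternality W k ξ xh i = ph i) ∧
          (1 - Matrix.diagonal k * W).mulVec xh = -ph)
        ↔ (xh = ξ ∧ ph = (Matrix.diagonal k * W - 1).mulVec ξ)) ∧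
    (∀ x : Fin n → ℝ, x ≠ ξ → aggSocialCost ξ ξ < aggSocialCost ξ x) := by
  have hKW : ∀ (x : Fin n → ℝ) (i : Fin n),
      (Matrix.diagonal k * W).mulVec x i = k i * W.mulVec x i := by
    intro x i
    rw [← Matrix.mulVec_mulVec]
    simp [Matrix.mulVec_diagonal]
  have hext : ∀ (x : Fin n → ℝ) (i : Fin n),
      aggExternality W k ξ x i = (Matrix.diagonal k * W).mulVec x i - ξ i := by
    intro x i
    rw [aggExternality, social_fderiv, loss_fderiv W hW, hKW]
    ring
  refine ⟨hext, ?_, ?_⟩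
  · intro xh ph
    constructor
    · rintro ⟨h1, h2⟩
      have hx : xh = ξ := by
        funext i
        have e2 := congrFun h2 i
        have e1 := h1 i
        rw [hext] at e1
        simp [Matrix.sub_mulVec, Matrix.one_mulVec] at e2
        have : xh i - (Matrix.diagonal k * W).mulVec xh i = -ph i := e2
        linarith [e1, this]
      subst hx
      refine ⟨rfl, ?_⟩
      funext i
      have e1 := h1 i
      rw [hext] at e1
      simp [Matrix.sub_mulVec, Matrix.one_mulVec]
      linarith
    · rintro ⟨hx, hp⟩
      subst hx hp
      constructor
      · intro i
        rw [hext]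
        simp [Matrix.sub_mulVec, Matrix.one_mulVec]
      · funext i
        simp [Matrix.sub_mulVec, Matrix.one_mulVec]
  · intro x hx
    have h0 : aggSocialCost ξ ξ = 0 := by simp [aggSocialCost]
    rw [h0, aggSocialCost]
    have hne : ∃ i, x i ≠ ξ i := by
      by_contra h
      push_neg at h
      exact hx (funext h)
    obtain ⟨i, hi⟩ := hne
    have : (0 : ℝ) < ∑ j, (x j - ξ j) ^ 2 := by
      refine Finset.sum_pos' (fun j _ => sq_nonneg _) ⟨i, Finset.mem_univ i, ?_⟩
      have h0 : x i - ξ i ≠ 0 := sub_ne_zero.mpr hi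
      positivity
    linarith
end

section
/- Let n ≥ 1, let W ∈ ℝ^{n×n} with W_ii = 0, let K = diag(k₁,…,k_n), let ξ ∈ ℝⁿ, and suppose A = I − KW is invertible. Let M ∈ ℝ^{n×n} be symmetric and satisfy (A^{−1})ᵀ M + M A^{−1} = I. Define x*(p) = −A^{−1} p, e(x) = KWx − ξ, and p† = (KW − I) ξ. Then for every p ∈ ℝⁿ: 2 (p − p†)ᵀ M (e(x*(p)) − p) = −‖p − p†‖², where ‖·‖ is the Euclidean norm. In particular, the Lyapunov function V(p) = (p − p†)ᵀ M (p − p†) strictly decreases along the incentive dynamics ṗ = e(x*(p)) − p at every p ≠ p†. -/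
open Finset Matrix

/-- Lyapunov computation in the proof of Proposition 3:
with `A = I − KW` invertible, `x*(p) = −A⁻¹p`, `e(x) = KWx − ξ`, `p† = (KW − I)ξ`, and
`M` symmetric satisfying `(A⁻¹)ᵀ M + M A⁻¹ = I`, one has
`2 (p − p†)ᵀ M (e(x*(p)) − p) = −‖p − p†‖²` for every `p`; in particular the Lyapunov
function `V(p) = (p − p†)ᵀ M (p − p†)` strictly decreases along `ṗ = e(x*(p)) − p`
at every `p ≠ p†`. -/
theorem aggregative_lyapunov_identity
    (n : ℕ) (hn : 1 ≤ n) (W : Matrix (Fin n) (Fin n) ℝ) (hW : ∀ i, W i i = 0)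
    (k ξ : Fin n → ℝ)
    (A : Matrix (Fin n) (Fin n) ℝ) (hA : A = 1 - Matrix.diagonal k * W)
    (hAunit : IsUnit A.det)
    (M : Matrix (Fin n) (Fin n) ℝ) (hMsymm : M.IsSymm)
    (hLyap : (A⁻¹)ᵀ * M + M * A⁻¹ = 1)
    (xstar : (Fin n → ℝ) → (Fin n → ℝ)) (hxstar : ∀ p, xstar p = -(A⁻¹.mulVec p))
    (e : (Fin n → ℝ) → (Fin n → ℝ))
    (he : ∀ x, e x = (Matrix.diagonal k * W).mulVec x - ξ)
    (pdag : Fin n → ℝ) (hpdag : pdag = (Matrix.diagonal k * W - 1).mulVec ξ) :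
    (∀ p : Fin n → ℝ,
      2 * ((p - pdag) ⬝ᵥ M.mulVec (e (xstar p) - p)) = -∑ i, (p i - pdag i) ^ 2) ∧
    (∀ p : Fin n → ℝ, p ≠ pdag →
      2 * ((p - pdag) ⬝ᵥ M.mulVec (e (xstar p) - p)) < 0) := by
  have hKW : Matrix.diagonal k * W = 1 - A := by rw [hA, sub_sub_cancel]
  have hkey : ∀ p : Fin n → ℝ,
      e (xstar p) - p = -(A⁻¹.mulVec (p - pdag)) := by
    intro p
    have h1 : (Matrix.diagonal k * W) * A⁻¹ = A⁻¹ - 1 := by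
      rw [hKW, sub_mul, one_mul, Matrix.mul_nonsing_inv A hAunit]
    have h2 : pdag = -(A.mulVec ξ) := by
      rw [hpdag, hKW]
      simp [Matrix.sub_mulVec, Matrix.neg_mulVec]
    have h4 : A⁻¹.mulVec (A.mulVec ξ) = ξ := by
      rw [Matrix.mulVec_mulVec, Matrix.nonsing_inv_mul A hAunit, Matrix.one_mulVec]
    have h5 : A⁻¹.mulVec (p - pdag) = A⁻¹.mulVec p + ξ := by
      rw [h2, sub_neg_eq_add, Matrix.mulVec_add, h4]
    have h3 : (Matrix.diagonal k * W).mulVec (-(A⁻¹.mulVec p))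
        = -((A⁻¹ - 1).mulVec p) := by
      rw [Matrix.mulVec_neg, Matrix.mulVec_mulVec, h1]
    rw [he, hxstar, h3, h5, Matrix.sub_mulVec, Matrix.one_mulVec]
    abel
  have hmain : ∀ p : Fin n → ℝ,
      2 * ((p - pdag) ⬝ᵥ M.mulVec (e (xstar p) - p)) = -∑ i, (p i - pdag i) ^ 2 := by
    intro p
    rw [hkey p, Matrix.mulVec_neg, dotProduct_neg, Matrix.mulVec_mulVec]
    set q := p - pdag with hq
    have hsym : q ⬝ᵥ ((A⁻¹)ᵀ * M).mulVec q = q ⬝ᵥ (M * A⁻¹).mulVec q := by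
      rw [Matrix.dotProduct_mulVec, ← Matrix.transpose_transpose ((A⁻¹)ᵀ * M),
        Matrix.vecMul_transpose, Matrix.transpose_mul, Matrix.transpose_transpose,
        hMsymm.eq, dotProduct_comm]
    have h2q : 2 * (q ⬝ᵥ (M * A⁻¹).mulVec q) = q ⬝ᵥ q := by
      have := congrArg (fun B => q ⬝ᵥ B.mulVec q) hLyap
      simp only [Matrix.add_mulVec, dotProduct_add, Matrix.one_mulVec] at this
      rw [hsym] at this
      linarith
    have hsum : q ⬝ᵥ q = ∑ i, (p i - pdag i) ^ 2 := by
      simp [hq, dotProduct, sq]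
    linarith
  refine ⟨hmain, fun p hp => ?_⟩
  rw [hmain p]
  have hne : p - pdag ≠ 0 := sub_ne_zero.mpr hp
  have : 0 < ∑ i, (p i - pdag i) ^ 2 := by
    obtain ⟨i, hi⟩ := Function.ne_iff.mp hne
    apply Finset.sum_pos' (fun j _ => sq_nonneg _) ⟨i, Finset.mem_univ i, ?_⟩
    have : p i - pdag i ≠ 0 := by simpa using hi
    positivity
  linarith
end

section
/- Let n ≥ 1, θ, ν ∈ ℝ, δ > 0, and p ∈ ℝⁿ, and let x*(p) ∈ ℝⁿ be given by x*_i(p) = (θ − ν − n p_i + Σ_{j≠i} p_j)/(δ(n+1)). If x : [0, ∞) → ℝⁿ is differentiable and satisfies the best-response dynamics ẋ_i(t) = −x_i(t) + (θ − δ Σ_{j≠i} x_j(t) − ν − p_i)/(2δ) for all t ≥ 0 and all i, then x(t) → x*(p) as t → ∞. -/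
open Finset Filter

private lemma decay_lemma (c : ℝ) (g : ℝ → ℝ)
    (hg : ∀ t, 0 ≤ t → HasDerivAt g (-c * g t) t) :
    ∀ t, 0 ≤ t → g t = g 0 * Real.exp (-(c * t)) := by
  have HF : ∀ s, 0 ≤ s → HasDerivAt (fun u => Real.exp (c * u) * g u) 0 s := by
    intro s hs
    have h1 : HasDerivAt (fun u : ℝ => Real.exp (c * u)) (c * Real.exp (c * s)) s := by
      have := (Real.hasDerivAt_exp (c * s)).comp s ((hasDerivAt_id s).const_mul c)
      simpa [mul_comm, Function.comp_def] using this
    have h2 := h1.mul (hg s hs)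
    refine h2.congr_deriv (Eq.symm ?_)
    ring
  intro t ht
  have key : Real.exp (c * t) * g t = g 0 := by
    have := constant_of_has_deriv_right_zero (f := fun u => Real.exp (c * u) * g u)
      (a := 0) (b := t)
      (fun s hs => ((HF s hs.1).continuousAt).continuousWithinAt)
      (fun s hs => (HF s hs.1).hasDerivWithinAt) t ⟨ht, le_refl t⟩
    simpa using this
  have hexp : Real.exp (c * t) ≠ 0 := Real.exp_ne_zero _
  rw [Real.exp_neg, ← key]
  field_simp

/-- convergence of best-response dynamics in the Cournot competition:
for any fixed incentive `p`, any solution of the continuous-time best-response dynamics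
`ẋᵢ(t) = −xᵢ(t) + (θ − δ Σ_{j≠i} xⱼ(t) − ν − pᵢ)/(2δ)` on `[0, ∞)` converges to the Nash
equilibrium `x*(p)` with `x*ᵢ(p) = (θ − ν − n pᵢ + Σ_{j≠i} pⱼ)/(δ(n+1))`. -/
theorem cournot_best_response_dynamics_converge
    (n : ℕ) (hn : 1 ≤ n) (θ ν δ : ℝ) (hδ : 0 < δ) (p : Fin n → ℝ)
    (xstar : Fin n → ℝ)
    (hxstar : ∀ i, xstar i =
      (θ - ν - n * p i + ∑ j ∈ Finset.univ.erase i, p j) / (δ * (n + 1)))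
    (x : ℝ → Fin n → ℝ)
    (hode : ∀ t : ℝ, 0 ≤ t → HasDerivAt x
      (fun i => -x t i + (θ - δ * ∑ j ∈ Finset.univ.erase i, x t j - ν - p i) / (2 * δ)) t) :
    Tendsto x atTop (nhds xstar) := by
  have hδ' : δ ≠ 0 := ne_of_gt hδ
  have hn0 : (n : ℝ) ≠ 0 := Nat.cast_ne_zero.mpr (by omega)
  have hn1 : (n : ℝ) + 1 ≠ 0 := by positivity
  set P : ℝ := ∑ j, p j with hP
  set Ss : ℝ := ∑ j, xstar j with hSsdef
  have herase_p : ∀ i, ∑ j ∈ Finset.univ.erase i, p j = P - p i := fun i =>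
    Finset.sum_erase_eq_sub (Finset.mem_univ i)
  have herase_x : ∀ i t, ∑ j ∈ Finset.univ.erase i, x t j = (∑ j, x t j) - x t i := fun i t =>
    Finset.sum_erase_eq_sub (Finset.mem_univ i)
  have hSsval : Ss = ((n : ℝ) * (θ - ν) - P) / (δ * (n + 1)) := by
    rw [hSsdef]
    have : ∀ i, xstar i = (θ - ν - n * p i + (P - p i)) / (δ * (n + 1)) := by
      intro i; rw [hxstar i, herase_p i]
    rw [Finset.sum_congr rfl fun i _ => this i, ← Finset.sum_div]
    congr 1
    simp only [Finset.sum_add_distrib, Finset.sum_sub_distrib, Finset.sum_const,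
      Finset.card_univ, Fintype.card_fin, ← Finset.mul_sum, nsmul_eq_mul, ← hP]
    push_cast
    ring
  have hkey : ∀ i, xstar i + Ss = (θ - ν - p i) / δ := by
    intro i
    rw [hxstar i, herase_p i, hSsval]
    field_simp
    ring
  -- componentwise ODE
  have hxi : ∀ i t, 0 ≤ t → HasDerivAt (fun u => x u i)
      (-(x t i) + (θ - δ * ((∑ j, x t j) - x t i) - ν - p i) / (2 * δ)) t := by
    intro i t ht
    have h := ((ContinuousLinearMap.proj (R := ℝ) (φ := fun _ : Fin n => ℝ)
      i).hasFDerivAt).comp_hasDerivAt t (hode t ht)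
    simpa [herase_x i t, Function.comp_def] using h
  -- derivative of the total sum
  have hSx : ∀ t, 0 ≤ t → HasDerivAt (fun u => ∑ j, x u j)
      (-(((n : ℝ) + 1) / 2) * ((∑ j, x t j) - Ss)) t := by
    intro t ht
    have h := HasDerivAt.fun_sum (fun i (_ : i ∈ Finset.univ) => hxi i t ht)
    refine h.congr_deriv (Eq.symm ?_)
    have hterm : ∀ i, (-(x t i) + (θ - δ * ((∑ j, x t j) - x t i) - ν - p i) / (2 * δ))
        = -(1/2) * x t i - (1/2) * (∑ j, x t j) + (θ - ν - p i) / (2 * δ) := by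
      intro i; field_simp; ring
    rw [Finset.sum_congr rfl fun i _ => hterm i]
    rw [Finset.sum_add_distrib, Finset.sum_sub_distrib, ← Finset.mul_sum, ← Finset.mul_sum,
      Finset.sum_const, Finset.card_univ, Fintype.card_fin, ← Finset.sum_div]
    have : ∑ i : Fin n, (θ - ν - p i) = (n : ℝ) * (θ - ν) - P := by
      rw [Finset.sum_sub_distrib, Finset.sum_const, Finset.card_univ, Fintype.card_fin, ← hP]
      push_cast; ring
    rw [this, hSsval]
    field_simp
    ring
  -- decay of the sum
  have hA : ∀ t, 0 ≤ t → (∑ j, x t j) - Ss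
      = ((∑ j, x 0 j) - Ss) * Real.exp (-((((n : ℝ) + 1) / 2) * t)) := by
    have := decay_lemma (((n : ℝ) + 1) / 2) (fun t => (∑ j, x t j) - Ss)
      (fun t ht => (hSx t ht).sub_const Ss)
    simpa using this
  set s0 : ℝ := (∑ j, x 0 j) - Ss with hs0
  -- componentwise decay
  have hB : ∀ i t, 0 ≤ t →
      x t i - xstar i - (s0 / n) * Real.exp (-((((n : ℝ) + 1) / 2) * t))
      = (x 0 i - xstar i - s0 / n) * Real.exp (-((1:ℝ)/2 * t)) := by
    intro i
    have hgd : ∀ t, 0 ≤ t → HasDerivAt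
        (fun u => x u i - xstar i - (s0 / n) * Real.exp (-((((n : ℝ) + 1) / 2) * u)))
        (-(1/2) * (x t i - xstar i - (s0 / n) * Real.exp (-((((n : ℝ) + 1) / 2) * t)))) t := by
      intro t ht
      have hE : HasDerivAt (fun u : ℝ => Real.exp (-((((n : ℝ) + 1) / 2) * u)))
          (-((((n : ℝ) + 1) / 2)) * Real.exp (-((((n : ℝ) + 1) / 2) * t))) t := by
        have := (Real.hasDerivAt_exp (-((((n : ℝ) + 1) / 2) * t))).comp t
          (((hasDerivAt_id t).const_mul (((n : ℝ) + 1) / 2)).neg)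
        simpa [mul_comm, Function.comp_def] using this
      have h := ((hxi i t ht).sub_const (xstar i)).sub (hE.const_mul (s0 / n))
      refine h.congr_deriv (Eq.symm ?_)
      have hSx_t : (∑ j, x t j) = Ss + s0 * Real.exp (-((((n : ℝ) + 1) / 2) * t)) := by
        have := hA t ht; linarith
      have e2 : θ = δ * (xstar i + Ss) + ν + p i := by
        have := hkey i; field_simp at this; linarith
      rw [hSx_t, e2]
      field_simp
      ring
    have := decay_lemma (1/2)
      (fun u => x u i - xstar i - (s0 / n) * Real.exp (-((((n : ℝ) + 1) / 2) * u))) hgd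
    intro t ht
    have h0 := this t ht
    simpa using h0
  -- conclude
  rw [tendsto_pi_nhds]
  intro i
  have hE1 : Tendsto (fun t : ℝ => Real.exp (-((((n : ℝ) + 1) / 2) * t))) atTop (nhds 0) := by
    apply Real.tendsto_exp_atBot.comp
    apply tendsto_neg_atTop_atBot.comp
    exact Tendsto.const_mul_atTop (by positivity) tendsto_id
  have hE2 : Tendsto (fun t : ℝ => Real.exp (-((1:ℝ)/2 * t))) atTop (nhds 0) := by
    apply Real.tendsto_exp_atBot.comp
    apply tendsto_neg_atTop_atBot.comp
    exact Tendsto.const_mul_atTop (by norm_num) tendsto_id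
  have hlim : Tendsto (fun t : ℝ => xstar i + (s0 / n) * Real.exp (-((((n : ℝ) + 1) / 2) * t))
      + (x 0 i - xstar i - s0 / n) * Real.exp (-((1:ℝ)/2 * t))) atTop (nhds (xstar i)) := by
    have : Tendsto (fun t : ℝ => xstar i + (s0 / n) * Real.exp (-((((n : ℝ) + 1) / 2) * t))
        + (x 0 i - xstar i - s0 / n) * Real.exp (-((1:ℝ)/2 * t))) atTop
        (nhds (xstar i + (s0 / n) * 0 + (x 0 i - xstar i - s0 / n) * 0)) :=
      (tendsto_const_nhds.add (tendsto_const_nhds.mul hE1)).add (tendsto_const_nhds.mul hE2)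
    simpa using this
  apply hlim.congr'
  filter_upwards [eventually_ge_atTop (0:ℝ)] with t ht
  have := hB i t ht
  linarith
end
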